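/- Suppose φ : ℝ → ℝ is a C² function with ∫ φ² = 1, φ and φ' vanishing at ±∞, with φ' square-integrable, satisfying φ''(x) = (m² − E²)φ(x) + 2Ev f(x)φ(x) − v² f(x)² φ(x) for all x, where |E| < m. Then 2E⟨f⟩ < v⟨f²⟩ fails to hold in general, but the weaker identity −∫(φ')² + E² − m² = 2Ev⟨f⟩ − v²⟨f²⟩ holds, and consequently 2Ev⟨f⟩ − v²⟨f²⟩ < 0, i.e. 2E⟨f⟩ < v⟨f²⟩ when v > 0. -/

import Mathlib

open Real Filter MeasureTheory intervalIntegral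

/-- For a normalized `C²` solution of the expanded Klein–Gordon equation,
with `φ` and `φ'` vanishing at `±∞` and `φ'` square-integrable, the identity
`−∫ (φ')² + E² − m² = 2Ev⟨f⟩ − v²⟨f²⟩` holds, and consequently
`2Ev⟨f⟩ − v²⟨f²⟩ < 0`, i.e. `2E⟨f⟩ < v⟨f²⟩` since `v > 0`. -/
theorem stmt3 (m E v : ℝ) (f φ : ℝ → ℝ)
    (hm : 0 < m) (hE : |E| < m) (hv : 0 < v)
    (hφ : ContDiff ℝ 2 φ)
    (hnorm : ∫ x : ℝ, (φ x) ^ 2 = 1)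
    (hφ0 : Tendsto φ atTop (nhds 0)) (hφ0' : Tendsto φ atBot (nhds 0))
    (hdφ0 : Tendsto (deriv φ) atTop (nhds 0))
    (hdφ0' : Tendsto (deriv φ) atBot (nhds 0))
    (hint1 : Integrable (fun x => (deriv φ x) ^ 2))
    (hint2 : Integrable (fun x => f x * (φ x) ^ 2))
    (hint3 : Integrable (fun x => (f x) ^ 2 * (φ x) ^ 2))
    (hsol : ∀ x, deriv (deriv φ) x
      = (m ^ 2 - E ^ 2) * φ x + 2 * E * v * f x * φ x - v ^ 2 * (f x) ^ 2 * φ x) :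
    (-(∫ x : ℝ, (deriv φ x) ^ 2) + E ^ 2 - m ^ 2
        = 2 * E * v * (∫ x : ℝ, f x * (φ x) ^ 2)
          - v ^ 2 * (∫ x : ℝ, (f x) ^ 2 * (φ x) ^ 2)) ∧
    (2 * E * v * (∫ x : ℝ, f x * (φ x) ^ 2)
        - v ^ 2 * (∫ x : ℝ, (f x) ^ 2 * (φ x) ^ 2) < 0) ∧
    (2 * E * (∫ x : ℝ, f x * (φ x) ^ 2) < v * (∫ x : ℝ, (f x) ^ 2 * (φ x) ^ 2)) := by
  -- integrability of φ²
  have hφ2int : Integrable (fun x => (φ x) ^ 2) := by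
    by_contra h
    rw [integral_undef h] at hnorm
    norm_num at hnorm
  -- differentiability facts
  have hφd : Differentiable ℝ φ := hφ.differentiable (by norm_num)
  have hdφd : Differentiable ℝ (deriv φ) :=
    (hφ.iterate_deriv' 1 1).differentiable (by norm_num)
  -- derivative of φ * φ'
  have hg : ∀ x, HasDerivAt (fun x => φ x * deriv φ x)
      ((deriv φ x) ^ 2 + φ x * deriv (deriv φ) x) x := by
    intro x
    have h1 := (hφd x).hasDerivAt
    have h2 := (hdφd x).hasDerivAt
    have := h1.mul h2
    exact this.congr_deriv (by ring)
  -- the derivative rewritten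
  have hrw : (fun x => (deriv φ x) ^ 2 + φ x * deriv (deriv φ) x)
      = fun x => (deriv φ x) ^ 2 + ((m ^ 2 - E ^ 2) * (φ x) ^ 2
          + 2 * E * v * (f x * (φ x) ^ 2) - v ^ 2 * ((f x) ^ 2 * (φ x) ^ 2)) := by
    funext x
    rw [hsol x]
    ring
  have hgint : Integrable (fun x => (deriv φ x) ^ 2 + φ x * deriv (deriv φ) x) := by
    rw [hrw]
    exact hint1.add (((hφ2int.const_mul _).add (hint2.const_mul _)).sub (hint3.const_mul _))
  have htop : Tendsto (fun x => φ x * deriv φ x) atTop (nhds 0) := by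
    simpa using hφ0.mul hdφ0
  have hbot : Tendsto (fun x => φ x * deriv φ x) atBot (nhds 0) := by
    simpa using hφ0'.mul hdφ0'
  have hzero : ∫ x : ℝ, ((deriv φ x) ^ 2 + φ x * deriv (deriv φ) x) = 0 := by
    have := MeasureTheory.integral_of_hasDerivAt_of_tendsto hg hgint hbot htop
    simpa using this
  rw [hrw] at hzero
  have hI1 : Integrable (fun x => (m ^ 2 - E ^ 2) * (φ x) ^ 2) := hφ2int.const_mul _
  have hI2 : Integrable (fun x => 2 * E * v * (f x * (φ x) ^ 2)) := hint2.const_mul _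
  have hI3 : Integrable (fun x => v ^ 2 * ((f x) ^ 2 * (φ x) ^ 2)) := hint3.const_mul _
  have hI12 : Integrable (fun x => (m ^ 2 - E ^ 2) * (φ x) ^ 2
      + 2 * E * v * (f x * (φ x) ^ 2)) := hI1.add hI2
  have hI123 : Integrable (fun x => (m ^ 2 - E ^ 2) * (φ x) ^ 2
      + 2 * E * v * (f x * (φ x) ^ 2) - v ^ 2 * ((f x) ^ 2 * (φ x) ^ 2)) := hI12.sub hI3
  rw [MeasureTheory.integral_add hint1 hI123,
    MeasureTheory.integral_sub hI12 hI3,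
    MeasureTheory.integral_add hI1 hI2,
    MeasureTheory.integral_const_mul, MeasureTheory.integral_const_mul, MeasureTheory.integral_const_mul, hnorm] at hzero
  have key : -(∫ x : ℝ, (deriv φ x) ^ 2) + E ^ 2 - m ^ 2
      = 2 * E * v * (∫ x : ℝ, f x * (φ x) ^ 2)
        - v ^ 2 * (∫ x : ℝ, (f x) ^ 2 * (φ x) ^ 2) := by linarith
  have hEm : E ^ 2 < m ^ 2 := by
    have h := abs_lt.mp hE
    nlinarith [h.1, h.2]
  have hnn : 0 ≤ ∫ x : ℝ, (deriv φ x) ^ 2 :=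
    integral_nonneg fun x => sq_nonneg _
  have hneg : 2 * E * v * (∫ x : ℝ, f x * (φ x) ^ 2)
      - v ^ 2 * (∫ x : ℝ, (f x) ^ 2 * (φ x) ^ 2) < 0 := by linarith
  refine ⟨key, hneg, ?_⟩
  nlinarith [hneg, hv]
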